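/- (Equal sensitivity to linear anticipation trends.) Let τ̂_w = Σ_{it} v_it Y_it be any linear estimator that is unbiased for τ_w = Σ_{it∈Ω₁} w_it τ_it under the two-way fixed effects model with unrestricted treatment effects and no never-treated units. If the data are generated as Y_it = (κ₀ + κ₁K_it)·1[D_it = 0] for constants κ₀, κ₁, then E[τ̂_w] = −Σ_{it∈Ω₁} w_it(κ₀ + κ₁K_it). In particular, all such robust linear unbiased estimators have identical bias under linear anticipation trends. -/
import Mathlib


open Finset

/-- Equal sensitivity of all robust linear unbiased estimators to linear
anticipation trends.  Let `τ̂_w = Σ_{(i,t)∈Ω} v_it Y_it` be linear and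
unbiased for `τ_w = Σ_{(i,t)∈Ω₁} w_it τ_it` under the two-way fixed effects
model with unrestricted treatment effects: whenever
`E[Y_it] = α_i + β_t + τ_it D_it` (with `D_it = 1[t ≥ E_i]`, all event dates
finite), `E[τ̂_w] = τ_w`, for all `(α, β, τ)`.  If instead the mean outcomes
are `E[Y_it] = (κ₀ + κ₁ K_it)·1[D_it = 0]` with `K_it = t − E_i`, then
`E[τ̂_w] = −Σ_{(i,t)∈Ω₁} w_it (κ₀ + κ₁ K_it)`. -/
theorem equal_sensitivity_linear_pretrends {ι : Type*} [DecidableEq ι]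
    (Ω : Finset (ι × ℤ)) (E : ι → ℤ)
    (D : ι → ℤ → ℝ) (hD : ∀ i t, D i t = if E i ≤ t then 1 else 0)
    (Ω₁ : Finset (ι × ℤ)) (hΩ₁ : Ω₁ = Ω.filter (fun p => E p.1 ≤ p.2))
    (v w : ι → ℤ → ℝ)
    (hunbiased : ∀ (α : ι → ℝ) (β : ℤ → ℝ) (τ : ι → ℤ → ℝ),
      ∑ p ∈ Ω, v p.1 p.2 * (α p.1 + β p.2 + τ p.1 p.2 * D p.1 p.2)
        = ∑ p ∈ Ω₁, w p.1 p.2 * τ p.1 p.2)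
    (κ₀ κ₁ : ℝ) :
    ∑ p ∈ Ω, v p.1 p.2 *
        ((κ₀ + κ₁ * ((p.2 - E p.1 : ℤ) : ℝ)) * (if p.2 < E p.1 then 1 else 0))
      = -∑ p ∈ Ω₁, w p.1 p.2 * (κ₀ + κ₁ * ((p.2 - E p.1 : ℤ) : ℝ)) := by
  have h := hunbiased (fun i => κ₀ - κ₁ * (E i : ℝ)) (fun t => κ₁ * (t : ℝ))
    (fun i t => -(κ₀ + κ₁ * ((t - E i : ℤ) : ℝ)))
  simp only [mul_neg] at h
  rw [← Finset.sum_neg_distrib, ← h]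
  apply Finset.sum_congr rfl
  intro p _
  rw [hD]
  by_cases hc : E p.1 ≤ p.2
  · simp only [if_pos hc, if_neg (not_lt.mpr hc)]
    push_cast
    ring
  · simp only [if_neg hc, if_pos (lt_of_not_ge hc)]
    push_cast
    ring
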